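/- For every Θ ∈ G, the spectral norm of X_Θ satisfies ‖X_Θ‖_{2→2} = √(N_R·N_T). Consequently, (i) for every x ∈ ℂ^N, ‖V_x‖_F = ‖x‖₂, and (ii) for every s-sparse x ∈ ℂ^N, ‖V_x‖_{2→2} ≤ √(s/N_t)·‖x‖₂. -/

import Mathlib

open MeasureTheory ProbabilityTheory Complex
open scoped ENNReal Matrix

noncomputable section

namespace MIMO

/-- Squared ℓ²-norm of a complex vector. -/
def l2normSq {ι : Type*} [Fintype ι] (x : ι → ℂ) : ℝ := ∑ i, ‖x i‖ ^ 2

/-- ℓ²-norm of a complex vector. -/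
def l2norm {ι : Type*} [Fintype ι] (x : ι → ℂ) : ℝ := Real.sqrt (l2normSq x)

/-- ℓ¹-norm of a complex vector. -/
def l1norm {ι : Type*} [Fintype ι] (x : ι → ℂ) : ℝ := ∑ i, ‖x i‖

/-- Hermitian inner product, conjugate-linear in the first argument. -/
def cInner {ι : Type*} [Fintype ι] (x y : ι → ℂ) : ℂ := ∑ i, (starRingEnd ℂ) (x i) * y i

/-- Spectral norm (ℓ² → ℓ² operator norm) of a complex matrix. -/
def specNorm {m n : Type*} [Fintype m] [Fintype n] (A : Matrix m n ℂ) : ℝ :=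
  sSup ((fun x => l2norm (A.mulVec x)) '' {x | l2norm x ≤ 1})

/-- Frobenius norm of a complex matrix. -/
def frobNorm {m n : Type*} [Fintype m] [Fintype n] (A : Matrix m n ℂ) : ℝ :=
  Real.sqrt (∑ i, ∑ j, ‖A i j‖ ^ 2)

/-- The standard complex Gaussian measure on ℂ: real and imaginary parts are
independent real centered Gaussians of variance 1/2. -/
def stdCGaussian : Measure ℂ :=
  Measure.map (⇑Complex.measurableEquivRealProd.symm)
    ((gaussianReal 0 (1/2)).prod (gaussianReal 0 (1/2)))

/-- A mean-zero complex Gaussian measure of variance σ² on ℂ. -/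
def cGaussian (σ : ℝ) : Measure ℂ :=
  Measure.map (fun z : ℂ => (σ : ℂ) * z) stdCGaussian

/-- Complex Gaussian noise (independent entries, variance σ²). -/
def noiseMeasure (ι : Type*) [Fintype ι] (σ : ℝ) : Measure (ι → ℂ) :=
  Measure.pi (fun _ => cGaussian σ)

/-- The Steinhaus (uniform) distribution on the complex unit circle. -/
def steinhaus : Measure ℂ :=
  Measure.map (fun θ : ℝ => Complex.exp (θ * Complex.I))
    ((ENNReal.ofReal (2 * Real.pi))⁻¹ • volume.restrict (Set.Ico (0:ℝ) (2 * Real.pi)))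

/-- A Steinhaus vector: independent entries uniform on the complex unit circle. -/
def steinhausPi (ι : Type*) [Fintype ι] : Measure (ι → ℂ) := Measure.pi (fun _ => steinhaus)

/-- The joint distribution of the NT independent standard complex Gaussian signals in ℂ^{Nt}. -/
def signalMeasure (NT Nt : ℕ) : Measure (Fin NT → Fin Nt → ℂ) :=
  Measure.pi (fun _ => Measure.pi (fun _ => stdCGaussian))

/-- The angle–delay–Doppler parameter grid `[N_T N_R] × [N_t] × [N_t]`. -/
abbrev Grid (NT NR Nt : ℕ) := Fin (NT * NR) × Fin Nt × Fin Nt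

/-- `e^{2πi x}`. -/
def ePhase (x : ℝ) : ℂ := Complex.exp (((2 * Real.pi * x : ℝ) : ℂ) * Complex.I)

/-- The modulated circulant shift `M_f T_τ` applied to a signal:
`(M_f T_τ s)_k = e^{2πi f (k-1)/N_t} s_{k-τ}` (1-based indices; `k.val = k-1`). -/
def modShift (Nt : ℕ) [NeZero Nt] (τ f : ℕ) (s : Fin Nt → ℂ) (k : Fin Nt) : ℂ :=
  ePhase ((f : ℝ) * (k.1 : ℝ) / (Nt : ℝ)) * s (k - (Fin.ofNat Nt τ))

/-- The column `A_Θ` of the MIMO measurement matrix, `Θ = (β,τ,f)`;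
its `j`-th length-`N_t` block is
`e^{2πi β (j-1)/N_R} ∑_i e^{2πi β (i-1)/(N_T N_R)} M_f T_τ s_i`. -/
def colA (NT NR Nt : ℕ) [NeZero Nt] (sg : Fin NT → Fin Nt → ℂ)
    (Θ : Grid NT NR Nt) (p : Fin NR × Fin Nt) : ℂ :=
  ePhase (((Θ.1.1 : ℝ) + 1) * (p.1.1 : ℝ) / (NR : ℝ)) *
    ∑ i : Fin NT, ePhase (((Θ.1.1 : ℝ) + 1) * (i.1 : ℝ) / ((NT : ℝ) * (NR : ℝ))) *
      modShift Nt (Θ.2.1.1 + 1) (Θ.2.2.1 + 1) (sg i) p.2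

/-- The column `Ã_Θ = (N_T N_R N_t)^{-1/2} A_Θ` of the scaled measurement matrix. -/
def colAt (NT NR Nt : ℕ) [NeZero Nt] (sg : Fin NT → Fin Nt → ℂ)
    (Θ : Grid NT NR Nt) (p : Fin NR × Fin Nt) : ℂ :=
  ((Real.sqrt ((NT : ℝ) * (NR : ℝ) * (Nt : ℝ)) : ℂ))⁻¹ * colA NT NR Nt sg Θ p

/-- The MIMO measurement matrix `A`. -/
def Amat (NT NR Nt : ℕ) [NeZero Nt] (sg : Fin NT → Fin Nt → ℂ) :
    Matrix (Fin NR × Fin Nt) (Grid NT NR Nt) ℂ := fun p Θ => colA NT NR Nt sg Θ p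

/-- The scaled MIMO measurement matrix `Ã = (N_T N_R N_t)^{-1/2} A`. -/
def Atil (NT NR Nt : ℕ) [NeZero Nt] (sg : Fin NT → Fin Nt → ℂ) :
    Matrix (Fin NR × Fin Nt) (Grid NT NR Nt) ℂ := fun p Θ => colAt NT NR Nt sg Θ p

/-- The Gram matrix `Ã_T^* Ã_T` of the columns of `Ã` indexed by a subset `T`. -/
def gram (NT NR Nt : ℕ) [NeZero Nt] (sg : Fin NT → Fin Nt → ℂ)
    (T : Finset (Grid NT NR Nt)) : Matrix {Θ // Θ ∈ T} {Θ // Θ ∈ T} ℂ :=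
  fun Θ Θ' => cInner (colAt NT NR Nt sg Θ.1) (colAt NT NR Nt sg Θ'.1)

/-- `S_{[β]}`: the elements of `S` whose angle parameter is equivalent to `β`
(equivalent ⟺ difference divisible by `N_R`). -/
def classOf (NT NR Nt : ℕ) (S : Finset (Grid NT NR Nt)) (β : Fin (NT * NR)) :
    Finset (Grid NT NR Nt) :=
  S.filter (fun Θ => ((Θ.1.1 : ℤ) - (β.1 : ℤ)) % (NR : ℤ) = 0)

/-- A support set `S` is `η`-balanced if `|S_{[β]}| ≤ η |S| / N_R` for every angle class. -/
def IsBalanced (NT NR Nt : ℕ) (S : Finset (Grid NT NR Nt)) (η : ℝ) : Prop :=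
  ∀ β : Fin (NT * NR), ((classOf NT NR Nt S β).card : ℝ) ≤ η * (S.card : ℝ) / (NR : ℝ)

/-- The restricted isometry constant `δ_s(A)`: the smallest `δ ≥ 0` such that
`(1-δ)‖x‖₂² ≤ ‖Ax‖₂² ≤ (1+δ)‖x‖₂²` for all `s`-sparse `x`. -/
def ripConst {m n : Type*} [Fintype m] [Fintype n] (s : ℕ) (A : Matrix m n ℂ) : ℝ :=
  sInf {δ : ℝ | 0 ≤ δ ∧ ∀ x : n → ℂ, (Function.support x).ncard ≤ s →
    (1 - δ) * l2normSq x ≤ l2normSq (A.mulVec x) ∧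
      l2normSq (A.mulVec x) ≤ (1 + δ) * l2normSq x}


/-- The matrix `X_Θ`, whose `(i,j)`-th `N_t × N_t` block is
`e^{2πi β(i-1)/N_R} e^{2πi β(j-1)/(N_T N_R)} M_f T_τ`. -/
def Xmat (NT NR Nt : ℕ) [NeZero Nt] (Θ : Grid NT NR Nt) :
    Matrix (Fin NR × Fin Nt) (Fin NT × Fin Nt) ℂ :=
  fun p q =>
    ePhase (((Θ.1.1 : ℝ) + 1) * (p.1.1 : ℝ) / (NR : ℝ)) *
    ePhase (((Θ.1.1 : ℝ) + 1) * (q.1.1 : ℝ) / ((NT : ℝ) * (NR : ℝ))) *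
    (ePhase (((Θ.2.2.1 : ℝ) + 1) * (p.2.1 : ℝ) / (Nt : ℝ)) *
      (if q.2 = p.2 - (Fin.ofNat Nt (Θ.2.1.1 + 1 : ℕ)) then 1 else 0))

/-- The matrix `V_x = (N_T N_R N_t)^{-1/2} ∑_Θ x_Θ X_Θ`. -/
def Vx (NT NR Nt : ℕ) [NeZero Nt] (x : Grid NT NR Nt → ℂ) :
    Matrix (Fin NR × Fin Nt) (Fin NT × Fin Nt) ℂ :=
  ((Real.sqrt ((NT : ℝ) * (NR : ℝ) * (Nt : ℝ)) : ℂ))⁻¹ •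
    ∑ Θ : Grid NT NR Nt, x Θ • Xmat NT NR Nt Θ


/-! ### Auxiliary lemmas -/

section Aux

lemma ePhase_add (x y : ℝ) : ePhase (x + y) = ePhase x * ePhase y := by
  unfold ePhase
  rw [← Complex.exp_add]
  congr 1
  push_cast
  ring

lemma ePhase_int (k : ℤ) : ePhase (k : ℝ) = 1 := by
  unfold ePhase
  rw [show (((2 * Real.pi * (k:ℝ) : ℝ)) : ℂ) * Complex.I
      = (k : ℂ) * (2 * Real.pi * Complex.I) by push_cast; ring]
  exact Complex.exp_int_mul_two_pi_mul_I k

lemma ePhase_pow (x : ℝ) (m : ℕ) : ePhase x ^ m = ePhase (m * x) := by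
  unfold ePhase
  rw [← Complex.exp_nat_mul]
  congr 1
  push_cast
  ring

lemma abs_ePhase (x : ℝ) : ‖ePhase x‖ = 1 := by
  unfold ePhase
  rw [Complex.norm_exp]
  simp

lemma conj_ePhase (x : ℝ) : (starRingEnd ℂ) (ePhase x) = ePhase (-x) := by
  unfold ePhase
  rw [← Complex.exp_conj]
  congr 1
  simp [Complex.ext_iff]

lemma ePhase_eq_one_iff_int (x : ℝ) : ePhase x = 1 ↔ ∃ k : ℤ, x = k := by
  unfold ePhase
  rw [Complex.exp_eq_one_iff]
  constructor
  · rintro ⟨n, hn⟩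
    refine ⟨n, ?_⟩
    have him := congrArg Complex.im hn
    simp [Complex.ofReal_im, Complex.mul_im] at him
    have hπ := Real.pi_pos
    have h2 : 2 * Real.pi * x = (n : ℝ) * (2 * Real.pi) := by
      simpa using him
    nlinarith
  · rintro ⟨k, rfl⟩
    exact ⟨k, by push_cast; ring⟩

lemma sum_ePhase (n : ℕ) (hn : 0 < n) (a : ℤ) :
    ∑ m ∈ Finset.range n, ePhase ((a : ℝ) * m / n) = if (n : ℤ) ∣ a then (n : ℂ) else 0 := by
  have hn' : (n : ℝ) ≠ 0 := Nat.cast_ne_zero.2 hn.ne'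
  have hterm : ∀ m : ℕ, ePhase ((a : ℝ) * m / n) = ePhase ((a : ℝ) / n) ^ m := by
    intro m; rw [ePhase_pow]; congr 1; ring
  simp_rw [hterm]
  by_cases hd : (n : ℤ) ∣ a
  · obtain ⟨c, rfl⟩ := hd
    have : ((((n : ℤ) * c : ℤ)) : ℝ) / n = ((c : ℤ) : ℝ) := by push_cast; field_simp
    rw [this, ePhase_int]
    rw [if_pos ⟨c, rfl⟩]
    simp
  · have hζ : ePhase ((a : ℝ) / n) ≠ 1 := by
      rw [Ne, ePhase_eq_one_iff_int]
      rintro ⟨k, hk⟩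
      apply hd
      refine ⟨k, ?_⟩
      have : (a : ℝ) = n * k := by field_simp at hk; linarith [hk]
      exact_mod_cast this
    rw [geom_sum_eq hζ]
    rw [ePhase_pow]
    have : (n : ℝ) * ((a:ℝ)/n) = ((a : ℤ) : ℝ) := by field_simp
    rw [this, ePhase_int]
    simp [hd]

lemma sum_ePhase_fin (n : ℕ) [NeZero n] (a : ℤ) :
    ∑ k : Fin n, ePhase ((a : ℝ) * k.1 / n) = if (n : ℤ) ∣ a then (n : ℂ) else 0 := by
  rw [Fin.sum_univ_eq_sum_range (fun k => ePhase ((a : ℝ) * k / n))]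
  exact sum_ePhase n (Nat.pos_of_ne_zero (NeZero.ne n)) a

lemma delta_fin (n : ℕ) [NeZero n] (b b' : Fin n) :
    ∑ k : Fin n, ePhase (((b'.1 : ℝ) - (b.1 : ℝ)) * k.1 / n) = if b = b' then (n : ℂ) else 0 := by
  set a : ℤ := (b'.1 : ℤ) - b.1 with ha
  have hcast : ((b'.1 : ℝ) - (b.1 : ℝ)) = (a : ℝ) := by rw [ha]; push_cast; ring
  rw [hcast, sum_ePhase_fin n a]
  have hb : (b.1 : ℤ) < (n : ℕ) := by exact_mod_cast b.2
  have hb' : (b'.1 : ℤ) < (n : ℕ) := by exact_mod_cast b'.2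
  by_cases he : b = b'
  · rw [if_pos he, if_pos (by rw [ha, he]; simp)]
  · rw [if_neg he, if_neg]
    intro hdvd
    have h0 : a = 0 := Int.eq_zero_of_abs_lt_dvd hdvd (by rw [abs_lt]; omega)
    exact he (Fin.ext (by omega))

lemma delta_two (NT NR : ℕ) [NeZero NT] [NeZero NR] (b b' : Fin (NT * NR)) :
    (∑ i : Fin NR, ePhase (((b'.1 : ℝ) - (b.1 : ℝ)) * i.1 / NR)) *
      (∑ j : Fin NT, ePhase (((b'.1 : ℝ) - (b.1 : ℝ)) * j.1 / ((NT : ℝ) * NR))) =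
    if b = b' then ((NT * NR : ℕ) : ℂ) else 0 := by
  have hNT : (NT : ℝ) ≠ 0 := Nat.cast_ne_zero.2 (NeZero.ne NT)
  have hNR : (NR : ℝ) ≠ 0 := Nat.cast_ne_zero.2 (NeZero.ne NR)
  set a : ℤ := (b'.1 : ℤ) - b.1 with ha
  have hcast : ((b'.1 : ℝ) - (b.1 : ℝ)) = (a : ℝ) := by rw [ha]; push_cast; ring
  rw [hcast]
  have hb : (b.1 : ℤ) < ((NT * NR : ℕ) : ℤ) := by exact_mod_cast b.2
  have hb' : (b'.1 : ℤ) < ((NT * NR : ℕ) : ℤ) := by exact_mod_cast b'.2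
  rw [sum_ePhase_fin NR a]
  by_cases hd : (NR : ℤ) ∣ a
  · obtain ⟨c, hc⟩ := hd
    have h2 : ∀ j : Fin NT, ((a : ℝ) * j.1 / ((NT : ℝ) * NR)) = ((c : ℝ) * j.1 / NT) := by
      intro j; rw [hc]; push_cast; field_simp
    simp_rw [h2]
    rw [if_pos ⟨c, hc⟩, sum_ePhase_fin NT c]
    by_cases hd2 : (NT : ℤ) ∣ c
    · have hdvd : ((NT * NR : ℕ) : ℤ) ∣ a := by
        obtain ⟨e, he⟩ := hd2
        exact ⟨e, by rw [hc, he]; push_cast; ring⟩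
      have h0 : a = 0 := Int.eq_zero_of_abs_lt_dvd hdvd (by rw [abs_lt]; omega)
      have hbb : b = b' := Fin.ext (by omega)
      rw [if_pos hd2, if_pos hbb]
      push_cast; ring
    · rw [if_neg hd2, if_neg, mul_zero]
      rintro rfl
      apply hd2
      have ha0 : a = 0 := by rw [ha]; ring
      rw [ha0] at hc
      rcases mul_eq_zero.mp hc.symm with h | h
      · exact absurd h (by exact_mod_cast (NeZero.ne NR))
      · exact ⟨0, by rw [h, mul_zero]⟩
  · rw [if_neg hd, zero_mul, if_neg]
    rintro rfl
    exact hd ⟨0, by rw [mul_zero, ha]; ring⟩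

variable {ι : Type*} [Fintype ι]

lemma l2normSq_nonneg (x : ι → ℂ) : 0 ≤ l2normSq x :=
  Finset.sum_nonneg fun _ _ => sq_nonneg _

lemma l2norm_nonneg (x : ι → ℂ) : 0 ≤ l2norm x := Real.sqrt_nonneg _

lemma l2norm_eq_norm (x : ι → ℂ) :
    l2norm x = ‖(WithLp.equiv 2 (ι → ℂ)).symm x‖ := by
  rw [EuclideanSpace.norm_eq]
  simp [l2norm, l2normSq]

lemma l2norm_smul (c : ℂ) (x : ι → ℂ) : l2norm (c • x) = ‖c‖ * l2norm x := by
  rw [l2norm_eq_norm, l2norm_eq_norm]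
  have : (WithLp.equiv 2 (ι → ℂ)).symm (c • x) = c • (WithLp.equiv 2 (ι → ℂ)).symm x := rfl
  rw [this, norm_smul]

lemma l2norm_sum_le {κ : Type*} (s : Finset κ) (f : κ → ι → ℂ) :
    l2norm (∑ b ∈ s, f b) ≤ ∑ b ∈ s, l2norm (f b) := by
  simp_rw [l2norm_eq_norm]
  have : (WithLp.equiv 2 (ι → ℂ)).symm (∑ b ∈ s, f b)
      = ∑ b ∈ s, (WithLp.equiv 2 (ι → ℂ)).symm (f b) := by
    simp [WithLp.equiv, Equiv.refl]
  rw [this]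
  exact norm_sum_le _ _

lemma l1norm_le_sqrt_card_mul (x : ι → ℂ) (s : ℕ) (hs : (Function.support x).ncard ≤ s) :
    l1norm x ≤ Real.sqrt s * l2norm x := by
  classical
  set T : Finset ι := (Function.support x).toFinset with hT
  have hcard : (T.card : ℝ) ≤ (s : ℝ) := by
    have h := Set.ncard_eq_toFinset_card' (Function.support x)
    have : T.card ≤ s := by rw [hT, ← h]; exact hs
    exact_mod_cast this
  have h1 : l1norm x = ∑ i ∈ T, ‖x i‖ := by
    rw [l1norm]
    refine (Finset.sum_subset (Finset.subset_univ T) ?_).symm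
    intro i _ hi
    have : x i = 0 := by
      by_contra hxi
      exact hi (by simpa [hT, Set.mem_toFinset, Function.mem_support] using hxi)
    simp [this]
  have h2 : (∑ i ∈ T, ‖x i‖) ^ 2
      ≤ (T.card : ℝ) * ∑ i ∈ T, ‖x i‖ ^ 2 :=
    sq_sum_le_card_mul_sum_sq (s := T) (f := fun i => ‖x i‖)
  have h3 : ∑ i ∈ T, ‖x i‖ ^ 2 ≤ l2normSq x :=
    Finset.sum_le_sum_of_subset_of_nonneg (Finset.subset_univ T)
      (fun _ _ _ => sq_nonneg _)
  have h4 : l1norm x ^ 2 ≤ (s : ℝ) * l2normSq x := by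
    rw [h1]
    calc (∑ i ∈ T, ‖x i‖) ^ 2
        ≤ (T.card : ℝ) * ∑ i ∈ T, ‖x i‖ ^ 2 := h2
      _ ≤ (s : ℝ) * l2normSq x := by
          apply mul_le_mul hcard h3 (Finset.sum_nonneg fun _ _ => sq_nonneg _) (Nat.cast_nonneg _)
  have h5 : 0 ≤ l1norm x := Finset.sum_nonneg fun _ _ => norm_nonneg _
  calc l1norm x ≤ Real.sqrt ((s : ℝ) * l2normSq x) := by
        rw [Real.le_sqrt h5]
        · exact h4
        · exact mul_nonneg (Nat.cast_nonneg _) (l2normSq_nonneg x)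
    _ = Real.sqrt s * l2norm x := by rw [Real.sqrt_mul (Nat.cast_nonneg _)]; rfl

lemma sum_mulVec {m n κ : Type*} [Fintype m] [Fintype n] (t : Finset κ)
    (A : κ → Matrix m n ℂ) (v : n → ℂ) :
    (∑ a ∈ t, A a).mulVec v = ∑ a ∈ t, (A a).mulVec v :=
  map_sum (Matrix.mulVec.addMonoidHomLeft v) A t

end Aux

section XmatLemmas

variable {NT NR Nt : ℕ} [NeZero NT] [NeZero NR] [NeZero Nt]

set_option linter.unusedSectionVars false

lemma Xmat_mulVec (Θ : Grid NT NR Nt) (v : Fin NT × Fin Nt → ℂ) (p : Fin NR × Fin Nt) :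
    (Xmat NT NR Nt Θ).mulVec v p =
      ePhase (((Θ.1.1 : ℝ) + 1) * (p.1.1 : ℝ) / (NR : ℝ)) *
      ePhase (((Θ.2.2.1 : ℝ) + 1) * (p.2.1 : ℝ) / (Nt : ℝ)) *
      ∑ j : Fin NT, ePhase (((Θ.1.1 : ℝ) + 1) * (j.1 : ℝ) / ((NT : ℝ) * (NR : ℝ))) *
        v (j, p.2 - (Fin.ofNat Nt (Θ.2.1.1 + 1 : ℕ))) := by
  unfold Matrix.mulVec Xmat dotProduct
  rw [Fintype.sum_prod_type]
  simp only [mul_ite, ite_mul, mul_one, mul_zero, zero_mul, one_mul]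
  rw [Finset.mul_sum]
  refine Finset.sum_congr rfl fun j _ => ?_
  rw [Finset.sum_ite_eq' Finset.univ (p.2 - (Fin.ofNat Nt (Θ.2.1.1 + 1 : ℕ)))]
  simp only [Finset.mem_univ, if_pos]
  ring

lemma l2normSq_Xmat_mulVec (Θ : Grid NT NR Nt) (v : Fin NT × Fin Nt → ℂ) :
    l2normSq ((Xmat NT NR Nt Θ).mulVec v) =
      (NR : ℝ) * ∑ k : Fin Nt, ‖
        ∑ j : Fin NT, ePhase (((Θ.1.1 : ℝ) + 1) * (j.1 : ℝ) / ((NT : ℝ) * (NR : ℝ))) *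
          v (j, k)‖ ^ 2 := by
  unfold l2normSq
  rw [Fintype.sum_prod_type]
  have hterm : ∀ (i : Fin NR) (k : Fin Nt),
      ‖(Xmat NT NR Nt Θ).mulVec v (i, k)‖ ^ 2 =
      ‖∑ j : Fin NT, ePhase (((Θ.1.1 : ℝ) + 1) * (j.1 : ℝ) / ((NT : ℝ) * (NR : ℝ))) *
          v (j, k - (Fin.ofNat Nt (Θ.2.1.1 + 1 : ℕ)))‖ ^ 2 := by
    intro i k
    rw [Xmat_mulVec]
    simp only [norm_mul, abs_ePhase, one_mul]
  simp_rw [hterm]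
  rw [Finset.sum_const, Finset.card_univ, Fintype.card_fin, nsmul_eq_mul]
  congr 1
  exact (Equiv.sum_comp (Equiv.subRight (Fin.ofNat Nt (Θ.2.1.1 + 1 : ℕ)))
    (fun k => ‖∑ j : Fin NT,
      ePhase (((Θ.1.1 : ℝ) + 1) * (j.1 : ℝ) / ((NT : ℝ) * (NR : ℝ))) * v (j, k)‖ ^ 2))

lemma l2normSq_Xmat_le (Θ : Grid NT NR Nt) (v : Fin NT × Fin Nt → ℂ) :
    l2normSq ((Xmat NT NR Nt Θ).mulVec v) ≤ (NR : ℝ) * NT * l2normSq v := by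
  rw [l2normSq_Xmat_mulVec]
  have hk : ∀ k : Fin Nt, ‖
      ∑ j : Fin NT, ePhase (((Θ.1.1 : ℝ) + 1) * (j.1 : ℝ) / ((NT : ℝ) * (NR : ℝ))) *
        v (j, k)‖ ^ 2 ≤ (NT : ℝ) * ∑ j : Fin NT, ‖v (j, k)‖ ^ 2 := by
    intro k
    have h1 : ‖∑ j : Fin NT,
        ePhase (((Θ.1.1 : ℝ) + 1) * (j.1 : ℝ) / ((NT : ℝ) * (NR : ℝ))) * v (j, k)‖
        ≤ ∑ j : Fin NT, ‖v (j, k)‖ := by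
      refine le_trans (norm_sum_le _ _) (le_of_eq ?_)
      refine Finset.sum_congr rfl fun j _ => ?_
      rw [norm_mul, abs_ePhase, one_mul]
    have h2 : (∑ j : Fin NT, ‖v (j, k)‖) ^ 2
        ≤ (NT : ℝ) * ∑ j : Fin NT, ‖v (j, k)‖ ^ 2 := by
      have := sq_sum_le_card_mul_sum_sq (s := (Finset.univ : Finset (Fin NT)))
        (f := fun j => ‖v (j, k)‖)
      simpa [Finset.card_univ] using this
    calc ‖∑ j : Fin NT,
          ePhase (((Θ.1.1 : ℝ) + 1) * (j.1 : ℝ) / ((NT : ℝ) * (NR : ℝ))) * v (j, k)‖ ^ 2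
        ≤ (∑ j : Fin NT, ‖v (j, k)‖) ^ 2 := by
          apply pow_le_pow_left₀ (norm_nonneg _) h1
      _ ≤ (NT : ℝ) * ∑ j : Fin NT, ‖v (j, k)‖ ^ 2 := h2
  refine le_trans (mul_le_mul_of_nonneg_left (Finset.sum_le_sum fun k _ => hk k)
    (Nat.cast_nonneg NR)) (le_of_eq ?_)
  rw [← Finset.mul_sum, ← mul_assoc]
  congr 1
  unfold l2normSq
  rw [Fintype.sum_prod_type, Finset.sum_comm]

lemma l2norm_Xmat_le (Θ : Grid NT NR Nt) (v : Fin NT × Fin Nt → ℂ) :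
    l2norm ((Xmat NT NR Nt Θ).mulVec v) ≤ Real.sqrt ((NR : ℝ) * NT) * l2norm v := by
  unfold l2norm
  rw [← Real.sqrt_mul (by positivity) (l2normSq v)]
  exact Real.sqrt_le_sqrt (by
    rw [mul_assoc] at *
    exact (mul_assoc (NR:ℝ) NT (l2normSq v)) ▸ l2normSq_Xmat_le Θ v)

lemma specNorm_Xmat (Θ : Grid NT NR Nt) :
    specNorm (Xmat NT NR Nt Θ) = Real.sqrt ((NR : ℝ) * NT) := by
  classical
  have hNT : (0:ℝ) < NT := Nat.cast_pos.2 (Nat.pos_of_ne_zero (NeZero.ne NT))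
  set v₀ : Fin NT × Fin Nt → ℂ := fun q =>
    if q.2 = 0 then (starRingEnd ℂ)
      (ePhase (((Θ.1.1 : ℝ) + 1) * (q.1.1 : ℝ) / ((NT : ℝ) * (NR : ℝ)))) *
      ((Real.sqrt NT : ℝ) : ℂ)⁻¹ else 0 with hv₀
  have habs : ∀ q : Fin NT × Fin Nt,
      ‖v₀ q‖ ^ 2 = if q.2 = 0 then (NT : ℝ)⁻¹ else 0 := by
    intro q
    rw [hv₀]
    by_cases h : q.2 = 0
    · simp only [h, if_true]
      rw [norm_mul, Complex.norm_conj, abs_ePhase, one_mul, norm_inv, Complex.norm_real, Real.norm_eq_abs,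
        _root_.abs_of_nonneg (Real.sqrt_nonneg _), ← Real.sqrt_inv, Real.sq_sqrt (by positivity)]
    · simp [h]
  have hnormSq : l2normSq v₀ = 1 := by
    unfold l2normSq
    rw [Fintype.sum_prod_type]
    have hj : ∀ j : Fin NT, ∑ l : Fin Nt, ‖v₀ (j, l)‖ ^ 2 = (NT : ℝ)⁻¹ := by
      intro j
      simp_rw [habs]
      simp
    simp_rw [hj]
    rw [Finset.sum_const, Finset.card_univ, Fintype.card_fin, nsmul_eq_mul]
    field_simp
  have hXv : l2normSq ((Xmat NT NR Nt Θ).mulVec v₀) = (NR : ℝ) * NT := by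
    rw [l2normSq_Xmat_mulVec]
    have hk : ∀ k : Fin Nt,
        (∑ j : Fin NT, ePhase (((Θ.1.1 : ℝ) + 1) * (j.1 : ℝ) / ((NT : ℝ) * (NR : ℝ))) * v₀ (j, k))
        = if k = 0 then (NT : ℂ) * ((Real.sqrt NT : ℝ) : ℂ)⁻¹ else 0 := by
      intro k
      by_cases h : k = 0
      · simp only [h, if_true, hv₀]
        rw [Finset.sum_congr rfl (fun j _ => ?_), Finset.sum_const, Finset.card_univ,
          Fintype.card_fin, nsmul_eq_mul]
        rw [← mul_assoc, Complex.mul_conj, Complex.normSq_eq_norm_sq, abs_ePhase]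
        norm_num
      · simp [hv₀, h]
    simp_rw [hk]
    have habs2 : ∀ k : Fin Nt,
        ‖if k = 0 then (NT : ℂ) * ((Real.sqrt NT : ℝ) : ℂ)⁻¹ else 0‖ ^ 2
        = if k = 0 then (NT : ℝ) else 0 := by
      intro k
      by_cases h : k = 0
      · simp only [h, if_true]
        rw [norm_mul, norm_inv, Complex.norm_natCast, Complex.norm_real, Real.norm_eq_abs,
          _root_.abs_of_nonneg (Real.sqrt_nonneg _)]
        rw [mul_pow, ← Real.sqrt_inv, Real.sq_sqrt (by positivity)]
        field_simp
      · simp [h]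
    simp_rw [habs2]
    simp
  have hub : ∀ r ∈ (fun x => l2norm ((Xmat NT NR Nt Θ).mulVec x)) '' {x | l2norm x ≤ 1},
      r ≤ Real.sqrt ((NR : ℝ) * NT) := by
    rintro r ⟨v, hv, rfl⟩
    calc l2norm ((Xmat NT NR Nt Θ).mulVec v) ≤ Real.sqrt ((NR : ℝ) * NT) * l2norm v :=
          l2norm_Xmat_le Θ v
      _ ≤ Real.sqrt ((NR : ℝ) * NT) * 1 := by
          exact mul_le_mul_of_nonneg_left hv (Real.sqrt_nonneg _)
      _ = Real.sqrt ((NR : ℝ) * NT) := mul_one _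
  have hmem : Real.sqrt ((NR : ℝ) * NT)
      ∈ (fun x => l2norm ((Xmat NT NR Nt Θ).mulVec x)) '' {x | l2norm x ≤ 1} := by
    refine ⟨v₀, ?_, ?_⟩
    · show l2norm v₀ ≤ 1
      unfold l2norm
      rw [hnormSq, Real.sqrt_one]
    · show l2norm ((Xmat NT NR Nt Θ).mulVec v₀) = _
      unfold l2norm
      rw [hXv]
  unfold specNorm
  exact le_antisymm (csSup_le ⟨_, hmem⟩ hub) (le_csSup ⟨_, hub⟩ hmem)

lemma dshift_inj (τ τ' : Fin Nt)
    (h : (Fin.ofNat Nt (τ.1 + 1 : ℕ)) = (Fin.ofNat Nt (τ'.1 + 1 : ℕ))) : τ = τ' := by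
  have h1 := congrArg Fin.val h
  rw [Fin.val_ofNat, Fin.val_ofNat] at h1
  have h2 := τ.2; have h3 := τ'.2
  have hn : 0 < Nt := Nat.pos_of_ne_zero (NeZero.ne Nt)
  apply Fin.ext
  rcases Nat.lt_or_ge (τ.1 + 1) Nt with hc | hc <;>
    rcases Nat.lt_or_ge (τ'.1 + 1) Nt with hc' | hc'
  · rw [Nat.mod_eq_of_lt hc, Nat.mod_eq_of_lt hc'] at h1; omega
  · rw [Nat.mod_eq_of_lt hc] at h1
    have : τ'.1 + 1 = Nt := by omega
    rw [this, Nat.mod_self] at h1; omega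
  · rw [Nat.mod_eq_of_lt hc'] at h1
    have : τ.1 + 1 = Nt := by omega
    rw [this, Nat.mod_self] at h1; omega
  · omega

lemma FIP (Θ Θ' : Grid NT NR Nt) :
    ∑ p : Fin NR × Fin Nt, ∑ q : Fin NT × Fin Nt,
      (starRingEnd ℂ) (Xmat NT NR Nt Θ p q) * Xmat NT NR Nt Θ' p q =
    if Θ = Θ' then ((NT * NR * Nt : ℕ) : ℂ) else 0 := by
  classical
  set d := (Fin.ofNat Nt (Θ.2.1.1 + 1 : ℕ)) with hd
  set d' := (Fin.ofNat Nt (Θ'.2.1.1 + 1 : ℕ)) with hd'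
  have hterm : ∀ (i : Fin NR) (k : Fin Nt) (j : Fin NT) (l : Fin Nt),
      (starRingEnd ℂ) (Xmat NT NR Nt Θ (i,k) (j,l)) * Xmat NT NR Nt Θ' (i,k) (j,l) =
      ePhase (((Θ'.1.1 : ℝ) - (Θ.1.1 : ℝ)) * i.1 / NR) *
        (ePhase (((Θ'.2.2.1 : ℝ) - (Θ.2.2.1 : ℝ)) * k.1 / Nt) *
          (ePhase (((Θ'.1.1 : ℝ) - (Θ.1.1 : ℝ)) * j.1 / ((NT : ℝ) * NR)) *
            ((if l = k - d then (1:ℂ) else 0) * (if l = k - d' then (1:ℂ) else 0)))) := by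
    intro i k j l
    simp only [Xmat]
    rw [map_mul, map_mul, map_mul]
    rw [conj_ePhase, conj_ePhase, conj_ePhase]
    rw [show (((Θ'.1.1 : ℝ) - (Θ.1.1 : ℝ)) * i.1 / NR)
        = (-(((Θ.1.1 : ℝ) + 1) * i.1 / NR)) + (((Θ'.1.1 : ℝ) + 1) * i.1 / NR) by ring,
      show (((Θ'.2.2.1 : ℝ) - (Θ.2.2.1 : ℝ)) * k.1 / Nt)
        = (-(((Θ.2.2.1 : ℝ) + 1) * k.1 / Nt)) + (((Θ'.2.2.1 : ℝ) + 1) * k.1 / Nt) by ring,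
      show (((Θ'.1.1 : ℝ) - (Θ.1.1 : ℝ)) * j.1 / ((NT : ℝ) * NR))
        = (-(((Θ.1.1 : ℝ) + 1) * j.1 / ((NT : ℝ) * NR)))
            + (((Θ'.1.1 : ℝ) + 1) * j.1 / ((NT : ℝ) * NR)) by ring,
      ePhase_add, ePhase_add, ePhase_add]
    have hconj_ite : (starRingEnd ℂ) (if l = k - d then (1:ℂ) else 0)
        = (if l = k - d then (1:ℂ) else 0) := by
      split <;> simp
    rw [hconj_ite]
    ring
  simp only [Fintype.sum_prod_type]
  simp_rw [hterm]
  have hL : ∀ k : Fin Nt, ∑ l : Fin Nt,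
      ((if l = k - d then (1:ℂ) else 0) * (if l = k - d' then (1:ℂ) else 0))
      = if Θ.2.1 = Θ'.2.1 then (1:ℂ) else 0 := by
    intro k
    simp only [ite_mul, one_mul, zero_mul]
    rw [Finset.sum_ite_eq' Finset.univ (k - d) (fun l => if l = k - d' then (1:ℂ) else 0)]
    simp only [Finset.mem_univ, if_pos]
    by_cases hτ : Θ.2.1 = Θ'.2.1
    · rw [if_pos hτ, if_pos (by rw [hd, hd', hτ])]
    · rw [if_neg hτ, if_neg]
      intro hc
      exact hτ (dshift_inj _ _ ((sub_right_inj.mp hc)))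
  simp_rw [← Finset.mul_sum, hL]
  simp_rw [← Finset.sum_mul]
  have hB := delta_fin Nt Θ.2.2 Θ'.2.2
  have hAC := delta_two NT NR Θ.1 Θ'.1
  rw [show (∑ i : Fin NR, ePhase (((Θ'.1.1 : ℝ) - (Θ.1.1 : ℝ)) * i.1 / NR)) *
      ((∑ k : Fin Nt, ePhase (((Θ'.2.2.1 : ℝ) - (Θ.2.2.1 : ℝ)) * k.1 / Nt)) *
        ((∑ j : Fin NT, ePhase (((Θ'.1.1 : ℝ) - (Θ.1.1 : ℝ)) * j.1 / ((NT : ℝ) * NR))) *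
          (if Θ.2.1 = Θ'.2.1 then (1:ℂ) else 0)))
    = ((∑ i : Fin NR, ePhase (((Θ'.1.1 : ℝ) - (Θ.1.1 : ℝ)) * i.1 / NR)) *
        (∑ j : Fin NT, ePhase (((Θ'.1.1 : ℝ) - (Θ.1.1 : ℝ)) * j.1 / ((NT : ℝ) * NR)))) *
      ((∑ k : Fin Nt, ePhase (((Θ'.2.2.1 : ℝ) - (Θ.2.2.1 : ℝ)) * k.1 / Nt)) *
        (if Θ.2.1 = Θ'.2.1 then (1:ℂ) else 0)) from by ring]
  rw [hAC, hB]
  by_cases h1 : Θ.1 = Θ'.1 <;> by_cases h2 : Θ.2.2 = Θ'.2.2 <;> by_cases h3 : Θ.2.1 = Θ'.2.1 <;>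
    simp [h1, h2, h3, Prod.ext_iff] <;> push_cast <;> ring

lemma swap4 {α β γ δ : Type*} [Fintype α] [Fintype β] [Fintype γ] [Fintype δ]
    (f : α → β → γ → δ → ℂ) :
    ∑ a, ∑ b, ∑ c, ∑ e, f a b c e = ∑ c, ∑ e, ∑ a, ∑ b, f a b c e := by
  have h1 : ∀ a : α, (∑ b, ∑ c, ∑ e, f a b c e) = ∑ c, ∑ b, ∑ e, f a b c e :=
    fun a => Finset.sum_comm
  simp_rw [h1]
  rw [Finset.sum_comm]
  refine Finset.sum_congr rfl fun c _ => ?_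
  have h2 : ∀ a : α, (∑ b, ∑ e, f a b c e) = ∑ e, ∑ b, f a b c e :=
    fun a => Finset.sum_comm
  simp_rw [h2]
  rw [Finset.sum_comm]

lemma frobNorm_Vx (x : Grid NT NR Nt → ℂ) : frobNorm (Vx NT NR Nt x) = l2norm x := by
  classical
  set S : Matrix (Fin NR × Fin Nt) (Fin NT × Fin Nt) ℂ :=
    ∑ Θ : Grid NT NR Nt, x Θ • Xmat NT NR Nt Θ with hSdef
  have hS : ∀ p q, S p q = ∑ Θ : Grid NT NR Nt, x Θ * Xmat NT NR Nt Θ p q := by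
    intro p q
    rw [hSdef]
    simp [Matrix.sum_apply]
  have hT : ∑ p : Fin NR × Fin Nt, ∑ q : Fin NT × Fin Nt, (starRingEnd ℂ) (S p q) * S p q
      = ((NT * NR * Nt : ℕ) : ℂ) * ∑ Θ : Grid NT NR Nt, (starRingEnd ℂ) (x Θ) * x Θ := by
    have hexp : ∀ p q, (starRingEnd ℂ) (S p q) * S p q
        = ∑ Θ : Grid NT NR Nt, ∑ Θ' : Grid NT NR Nt,
            ((starRingEnd ℂ) (x Θ) * x Θ') *
              ((starRingEnd ℂ) (Xmat NT NR Nt Θ p q) * Xmat NT NR Nt Θ' p q) := by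
      intro p q
      rw [hS, map_sum, Finset.sum_mul_sum]
      refine Finset.sum_congr rfl fun Θ _ => Finset.sum_congr rfl fun Θ' _ => ?_
      rw [map_mul]
      ring
    simp_rw [hexp]
    rw [swap4 (fun p q Θ Θ' => ((starRingEnd ℂ) (x Θ) * x Θ') *
      ((starRingEnd ℂ) (Xmat NT NR Nt Θ p q) * Xmat NT NR Nt Θ' p q))]
    have hpull : ∀ Θ Θ' : Grid NT NR Nt,
        (∑ p : Fin NR × Fin Nt, ∑ q : Fin NT × Fin Nt,
          ((starRingEnd ℂ) (x Θ) * x Θ') *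
            ((starRingEnd ℂ) (Xmat NT NR Nt Θ p q) * Xmat NT NR Nt Θ' p q))
        = ((starRingEnd ℂ) (x Θ) * x Θ') *
            (if Θ = Θ' then ((NT * NR * Nt : ℕ) : ℂ) else 0) := by
      intro Θ Θ'
      rw [← FIP Θ Θ', Finset.mul_sum]
      refine Finset.sum_congr rfl fun p _ => (Finset.mul_sum _ _ _).symm
    simp_rw [hpull]
    simp only [mul_ite, mul_zero, Finset.sum_ite_eq, Finset.mem_univ, if_true]
    rw [Finset.mul_sum]
    exact Finset.sum_congr rfl fun Θ _ => mul_comm _ _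
  have hpoint : ∀ z : ℂ, ((‖z‖ ^ 2 : ℝ) : ℂ) = (starRingEnd ℂ) z * z := by
    intro z
    rw [mul_comm, Complex.mul_conj, Complex.normSq_eq_norm_sq]
  have h2 : ∑ p : Fin NR × Fin Nt, ∑ q : Fin NT × Fin Nt, ‖S p q‖ ^ 2
      = ((NT * NR * Nt : ℕ) : ℝ) * l2normSq x := by
    apply Complex.ofReal_injective
    calc ((∑ p : Fin NR × Fin Nt, ∑ q : Fin NT × Fin Nt, ‖S p q‖ ^ 2 : ℝ) : ℂ)
        = ∑ p : Fin NR × Fin Nt, ∑ q : Fin NT × Fin Nt, ((‖S p q‖ ^ 2 : ℝ) : ℂ) := by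
          push_cast; rfl
      _ = ∑ p : Fin NR × Fin Nt, ∑ q : Fin NT × Fin Nt, (starRingEnd ℂ) (S p q) * S p q := by
          exact Finset.sum_congr rfl fun p _ => Finset.sum_congr rfl fun q _ => hpoint _
      _ = ((NT * NR * Nt : ℕ) : ℂ) * ∑ Θ : Grid NT NR Nt, (starRingEnd ℂ) (x Θ) * x Θ := hT
      _ = ((NT * NR * Nt : ℕ) : ℂ) * ((l2normSq x : ℝ) : ℂ) := by
          congr 1
          rw [show ((l2normSq x : ℝ) : ℂ)
              = ∑ Θ : Grid NT NR Nt, ((‖x Θ‖ ^ 2 : ℝ) : ℂ) by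
            unfold l2normSq; push_cast; rfl]
          exact (Finset.sum_congr rfl fun Θ _ => hpoint _).symm
      _ = (((NT * NR * Nt : ℕ) : ℝ) * l2normSq x : ℝ) := by push_cast; ring
  have hb : (0:ℝ) < (NT : ℝ) * NR * Nt := by
    have h1 : (0:ℝ) < NT := Nat.cast_pos.2 (Nat.pos_of_ne_zero (NeZero.ne NT))
    have h2 : (0:ℝ) < NR := Nat.cast_pos.2 (Nat.pos_of_ne_zero (NeZero.ne NR))
    have h3 : (0:ℝ) < Nt := Nat.cast_pos.2 (Nat.pos_of_ne_zero (NeZero.ne Nt))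
    positivity
  have hV : ∀ (p : Fin NR × Fin Nt) (q : Fin NT × Fin Nt),
      ‖Vx NT NR Nt x p q‖ ^ 2
        = ((NT : ℝ) * NR * Nt)⁻¹ * ‖S p q‖ ^ 2 := by
    intro p q
    have hVpq : Vx NT NR Nt x p q
        = ((Real.sqrt ((NT : ℝ) * NR * Nt) : ℝ) : ℂ)⁻¹ * S p q := by
      rw [Vx, ← hSdef, Matrix.smul_apply, smul_eq_mul]
    rw [hVpq, norm_mul, mul_pow, norm_inv, Complex.norm_real, Real.norm_eq_abs,
      _root_.abs_of_nonneg (Real.sqrt_nonneg _), inv_pow, Real.sq_sqrt hb.le]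
  unfold frobNorm
  simp_rw [hV, ← Finset.mul_sum]
  rw [h2]
  rw [show ((NT * NR * Nt : ℕ) : ℝ) = (NT : ℝ) * NR * Nt by push_cast; ring]
  rw [← mul_assoc, inv_mul_cancel₀ hb.ne', one_mul]
  rfl

lemma specNorm_Vx_le (s : ℕ) (x : Grid NT NR Nt → ℂ)
    (hx : (Function.support x).ncard ≤ s) :
    specNorm (Vx NT NR Nt x) ≤ Real.sqrt ((s : ℝ) / (Nt : ℝ)) * l2norm x := by
  classical
  have hNt : (0:ℝ) < Nt := Nat.cast_pos.2 (Nat.pos_of_ne_zero (NeZero.ne Nt))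
  have hNT : (0:ℝ) < NT := Nat.cast_pos.2 (Nat.pos_of_ne_zero (NeZero.ne NT))
  have hNR : (0:ℝ) < NR := Nat.cast_pos.2 (Nat.pos_of_ne_zero (NeZero.ne NR))
  apply csSup_le
  · refine ⟨l2norm ((Vx NT NR Nt x).mulVec 0), ⟨0, ?_, rfl⟩⟩
    show l2norm (0 : Fin NT × Fin Nt → ℂ) ≤ 1
    have : l2normSq (0 : Fin NT × Fin Nt → ℂ) = 0 := by
      unfold l2normSq; simp
    unfold l2norm
    rw [this, Real.sqrt_zero]
    norm_num
  rintro r ⟨v, hv, rfl⟩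
  simp only [Set.mem_setOf_eq] at hv
  have hmv : (Vx NT NR Nt x).mulVec v
      = ((Real.sqrt ((NT : ℝ) * NR * Nt) : ℝ) : ℂ)⁻¹ •
          ∑ Θ : Grid NT NR Nt, x Θ • ((Xmat NT NR Nt Θ).mulVec v) := by
    rw [Vx, Matrix.smul_mulVec, sum_mulVec]
    congr 1
    exact Finset.sum_congr rfl fun Θ _ => Matrix.smul_mulVec _ _ _
  show l2norm ((Vx NT NR Nt x).mulVec v) ≤ Real.sqrt ((s : ℝ) / (Nt : ℝ)) * l2norm x
  rw [hmv]
  have hstep1 : l2norm (((Real.sqrt ((NT : ℝ) * NR * Nt) : ℝ) : ℂ)⁻¹ •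
      ∑ Θ : Grid NT NR Nt, x Θ • ((Xmat NT NR Nt Θ).mulVec v))
      = (Real.sqrt ((NT : ℝ) * NR * Nt))⁻¹ *
          l2norm (∑ Θ : Grid NT NR Nt, x Θ • ((Xmat NT NR Nt Θ).mulVec v)) := by
    rw [l2norm_smul, norm_inv, Complex.norm_real, Real.norm_eq_abs,
      _root_.abs_of_nonneg (Real.sqrt_nonneg _)]
  rw [hstep1]
  have hstep2 : l2norm (∑ Θ : Grid NT NR Nt, x Θ • ((Xmat NT NR Nt Θ).mulVec v))
      ≤ Real.sqrt ((NR : ℝ) * NT) * l1norm x := by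
    calc l2norm (∑ Θ : Grid NT NR Nt, x Θ • ((Xmat NT NR Nt Θ).mulVec v))
        ≤ ∑ Θ : Grid NT NR Nt, l2norm (x Θ • ((Xmat NT NR Nt Θ).mulVec v)) :=
          l2norm_sum_le _ _
      _ ≤ ∑ Θ : Grid NT NR Nt, ‖x Θ‖ * Real.sqrt ((NR : ℝ) * NT) := by
          refine Finset.sum_le_sum fun Θ _ => ?_
          rw [l2norm_smul]
          calc ‖x Θ‖ * l2norm ((Xmat NT NR Nt Θ).mulVec v)
              ≤ ‖x Θ‖ * (Real.sqrt ((NR : ℝ) * NT) * l2norm v) :=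
                mul_le_mul_of_nonneg_left (l2norm_Xmat_le Θ v) (norm_nonneg _)
            _ ≤ ‖x Θ‖ * (Real.sqrt ((NR : ℝ) * NT) * 1) := by
                refine mul_le_mul_of_nonneg_left ?_ (norm_nonneg _)
                exact mul_le_mul_of_nonneg_left hv (Real.sqrt_nonneg _)
            _ = ‖x Θ‖ * Real.sqrt ((NR : ℝ) * NT) := by ring
      _ = Real.sqrt ((NR : ℝ) * NT) * l1norm x := by
          rw [← Finset.sum_mul]
          exact mul_comm _ _
  calc (Real.sqrt ((NT : ℝ) * NR * Nt))⁻¹ *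
        l2norm (∑ Θ : Grid NT NR Nt, x Θ • ((Xmat NT NR Nt Θ).mulVec v))
      ≤ (Real.sqrt ((NT : ℝ) * NR * Nt))⁻¹ * (Real.sqrt ((NR : ℝ) * NT) * l1norm x) := by
        exact mul_le_mul_of_nonneg_left hstep2 (by positivity)
    _ = (Real.sqrt Nt)⁻¹ * l1norm x := by
        rw [show (NT : ℝ) * NR * Nt = ((NR : ℝ) * NT) * Nt by ring,
          Real.sqrt_mul (by positivity)]
        rw [mul_inv]
        rw [show (Real.sqrt ((NR : ℝ) * NT))⁻¹ * (Real.sqrt (Nt:ℝ))⁻¹ *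
            (Real.sqrt ((NR : ℝ) * NT) * l1norm x)
          = ((Real.sqrt ((NR : ℝ) * NT))⁻¹ * Real.sqrt ((NR : ℝ) * NT)) *
              ((Real.sqrt (Nt:ℝ))⁻¹ * l1norm x) by ring]
        rw [inv_mul_cancel₀ (by positivity), one_mul]
    _ ≤ (Real.sqrt Nt)⁻¹ * (Real.sqrt s * l2norm x) := by
        exact mul_le_mul_of_nonneg_left (l1norm_le_sqrt_card_mul x s hx) (by positivity)
    _ = Real.sqrt ((s : ℝ) / (Nt : ℝ)) * l2norm x := by
        rw [Real.sqrt_div (Nat.cast_nonneg s)]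
        ring

end XmatLemmas

/-- norms of `X_Θ` and `V_x`: spectral norm of `X_Θ`, Frobenius norm of
`V_x`, and the spectral-norm bound for sparse `x`. -/
theorem stmt15 (NT NR Nt : ℕ) [NeZero NT] [NeZero NR] [NeZero Nt] :
    (∀ Θ : Grid NT NR Nt, specNorm (Xmat NT NR Nt Θ) = Real.sqrt ((NR : ℝ) * (NT : ℝ))) ∧
    (∀ x : Grid NT NR Nt → ℂ, frobNorm (Vx NT NR Nt x) = l2norm x) ∧
    (∀ (s : ℕ) (x : Grid NT NR Nt → ℂ), (Function.support x).ncard ≤ s →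
      specNorm (Vx NT NR Nt x) ≤ Real.sqrt ((s : ℝ) / (Nt : ℝ)) * l2norm x) := by
  exact ⟨fun Θ => specNorm_Xmat Θ, fun x => frobNorm_Vx x, fun s x hx => specNorm_Vx_le s x hx⟩

end MIMO
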